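/- Let h = Σ_I a_I q^I be a formal Fourier series in n variables. The Hadamard (coefficient-wise) product f ↦ h ⋆ f maps the space of holomorphic Fourier series ℂ{q,q⁻¹} into itself if and only if for every s > 0 there exists a constant C(s) such that |a_I| ≤ C(s)·e^{|I|s} for all I ∈ ℤⁿ. -/
import Mathlib


/-- The Euclidean norm of a lattice vector `I ∈ ℤⁿ`. -/
noncomputable def znorm {n : ℕ} (I : Fin n → ℤ) : ℝ := Real.sqrt (∑ i, ((I i : ℝ)) ^ 2)

/-- A family of Fourier coefficients defines a holomorphic Fourier series iff it
decays exponentially: `|b_I| = O(e^{-|I| t})` for some `t > 0`. -/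
def IsHolFourier {n : ℕ} (b : (Fin n → ℤ) → ℂ) : Prop :=
  ∃ t > (0:ℝ), ∃ C : ℝ, ∀ I, ‖b I‖ ≤ C * Real.exp (-(znorm I) * t)

lemma znorm_nonneg {n : ℕ} (I : Fin n → ℤ) : 0 ≤ znorm I := Real.sqrt_nonneg _

theorem stmt_9 {n : ℕ} (a : (Fin n → ℤ) → ℂ) :
    (∀ b, IsHolFourier b → IsHolFourier (fun I => a I * b I)) ↔
    (∀ s > (0:ℝ), ∃ C : ℝ, ∀ I, ‖a I‖ ≤ C * Real.exp (znorm I * s)) := by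
  constructor
  · intro H s hs
    have hb : IsHolFourier (fun I : Fin n → ℤ => (Real.exp (-(znorm I) * s) : ℂ)) := by
      refine ⟨s, hs, 1, fun I => ?_⟩
      rw [Complex.norm_real, Real.norm_eq_abs, abs_of_pos (Real.exp_pos _), one_mul]
    obtain ⟨t, ht, C, hC⟩ := H _ hb
    refine ⟨C, fun I => ?_⟩
    have h1 := hC I
    rw [norm_mul, Complex.norm_real, Real.norm_eq_abs,
      abs_of_pos (Real.exp_pos _)] at h1
    have hle : C * Real.exp (-(znorm I) * t) ≤ C := by
      have hCnn : 0 ≤ C := by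
        have h0 : 0 ≤ C * Real.exp (-(znorm I) * t) :=
          le_trans (mul_nonneg (norm_nonneg _) (Real.exp_pos _).le) h1
        nlinarith [Real.exp_pos (-(znorm I) * t)]
      have : Real.exp (-(znorm I) * t) ≤ 1 := by
        rw [Real.exp_le_one_iff]
        nlinarith [znorm_nonneg I]
      nlinarith
    calc ‖a I‖ = (‖a I‖ * Real.exp (-(znorm I) * s)) * Real.exp (znorm I * s) := by
          rw [mul_assoc, ← Real.exp_add]; ring_nf; simp
      _ ≤ C * Real.exp (znorm I * s) := by
          exact mul_le_mul_of_nonneg_right (h1.trans hle) (Real.exp_pos _).le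
  · intro H b ⟨t, ht, C, hC⟩
    obtain ⟨C', hC'⟩ := H (t / 2) (by linarith)
    refine ⟨t / 2, by linarith, C' * C, fun I => ?_⟩
    have h1 := hC I
    have h2 := hC' I
    have hCnn : 0 ≤ C := by
      have := (norm_nonneg (b I)).trans h1
      nlinarith [Real.exp_pos (-(znorm I) * t)]
    have key : C' * Real.exp (znorm I * (t/2)) * (C * Real.exp (-(znorm I) * t))
        = C' * C * Real.exp (-(znorm I) * (t/2)) := by
      rw [mul_mul_mul_comm, ← Real.exp_add]; ring_nf
    calc ‖a I * b I‖ = ‖a I‖ * ‖b I‖ := norm_mul _ _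
      _ ≤ (C' * Real.exp (znorm I * (t/2))) * (C * Real.exp (-(znorm I) * t)) :=
          mul_le_mul h2 h1 (norm_nonneg _) ((norm_nonneg _).trans h2)
      _ = C' * C * Real.exp (-(znorm I) * (t/2)) := key
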